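/- arXiv:1008.5182 — 5 statements merged into one kernel-verified Lean document; each statement's English description precedes it below -/
import Mathlib

section
/- Let b > 0, let j ≥ 1 be an integer, let w_− < w_+ be real numbers, let x_0 ∈ ℝ, and let w : ℝ → ℝ be the step function w(x) := w_+ for x ≥ x_0 and w(x) := w_− for x < x_0. Then Φ_j(k;w)² = ((w_+ − w_−)/2) p_j k^{2j−3} e^{−(b^{−1/2}k − b^{1/2}x_0)²} (1 + o(1)) as k → +∞, i.e. the quotient of the left-hand side by ((w_+ − w_−)/2) p_j k^{2j−3} e^{−(b^{−1/2}k − b^{1/2}x_0)²} tends to 1. -/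
open MeasureTheory Filter Set

/-- The (physicists') Hermite polynomial `H_q(x) = (-1)^q e^{x²} (d/dx)^q e^{-x²}`. -/
noncomputable def hermiteH (q : ℕ) (x : ℝ) : ℝ :=
  (-1)^q * Real.exp (x^2) * iteratedDeriv q (fun y => Real.exp (-(y^2))) x

/-- The normalized Hermite function `φ_j(x) = H_{j-1}(x) e^{-x²/2} / (√π 2^{j-1} (j-1)!)^{1/2}`. -/
noncomputable def hermFun (j : ℕ) (x : ℝ) : ℝ :=
  hermiteH (j-1) x * Real.exp (-(x^2)/2) /
    Real.sqrt (Real.sqrt Real.pi * 2^(j-1) * (j-1).factorial)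

/-- `p_j = 2^{j-1} b^{3/2-j} / (√π (j-1)!)`. -/
noncomputable def pj (b : ℝ) (j : ℕ) : ℝ :=
  2^(j-1) * b ^ ((3:ℝ)/2 - (j:ℝ)) / (Real.sqrt Real.pi * (j-1).factorial)

/-- `Φ_j(k;W)² = ∫ (W₊ - W(x + k/b)) b^{1/2} φ_j(b^{1/2} x)² dx`, with `Wp` the limit of `W` at `+∞`. -/
noncomputable def Phi (b : ℝ) (W : ℝ → ℝ) (Wp : ℝ) (j : ℕ) (k : ℝ) : ℝ :=
  Real.sqrt (∫ x : ℝ, (Wp - W (x + k / b)) * Real.sqrt b * (hermFun j (Real.sqrt b * x))^2)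

section Helpers

open Polynomial

lemma hermiteH_eq (q : ℕ) (x : ℝ) :
    hermiteH q x = (Real.sqrt 2)^q * Polynomial.aeval (Real.sqrt 2 * x) (Polynomial.hermite q) := by
  have h2 : Real.sqrt 2 ^ 2 = 2 := Real.sq_sqrt (by norm_num)
  have hg : ContDiff ℝ q (fun u : ℝ => Real.exp (-(u^2/2))) := by
    apply Real.contDiff_exp.comp
    exact (((contDiff_id.pow 2).div_const 2).neg)
  have hfun : (fun y : ℝ => Real.exp (-(y^2))) =
      (fun y : ℝ => (fun u : ℝ => Real.exp (-(u^2/2))) (Real.sqrt 2 * y)) := by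
    funext y
    simp only []
    congr 1
    rw [mul_pow, h2]
    ring
  rw [hermiteH, hfun, iteratedDeriv_comp_const_mul hg]
  simp only [iteratedDeriv_eq_iterate]
  rw [Polynomial.deriv_gaussian_eq_hermite_mul_gaussian]
  rw [show ((Real.sqrt 2 * x)^2/2 : ℝ) = x^2 by rw [mul_pow, h2]; ring]
  rw [show ((-1:ℝ))^q * Real.exp (x^2) * (Real.sqrt 2 ^ q *
      ((-1)^q * (aeval (Real.sqrt 2 * x)) (hermite q) * Real.exp (-(x^2)))) =
      (((-1:ℝ))^q * (-1)^q) * (Real.exp (x^2) * Real.exp (-(x^2))) *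
      (Real.sqrt 2 ^ q * (aeval (Real.sqrt 2 * x)) (hermite q)) by ring]
  rw [← Real.exp_add, ← mul_pow]
  norm_num


noncomputable def Pq (q : ℕ) : Polynomial ℝ :=
  (((Polynomial.hermite q).map (Int.castRingHom ℝ)).comp
    (Polynomial.C (-Real.sqrt 2) * Polynomial.X))^2

lemma sqrt2_ne : (-Real.sqrt 2 : ℝ) ≠ 0 := by
  simp [Real.sqrt_eq_zero']

lemma natDegree_hermite_map (q : ℕ) :
    ((Polynomial.hermite q).map (Int.castRingHom ℝ)).natDegree = q := by
  rw [(hermite_monic q).natDegree_map, natDegree_hermite]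

lemma Pq_natDegree (q : ℕ) : (Pq q).natDegree = 2 * q := by
  rw [Pq, natDegree_pow, natDegree_comp, natDegree_C_mul_X _ sqrt2_ne, natDegree_hermite_map]
  ring

lemma Pq_leadingCoeff (q : ℕ) : (Pq q).leadingCoeff = 2^q := by
  rw [Pq, leadingCoeff_pow, leadingCoeff_comp (by rw [natDegree_C_mul_X _ sqrt2_ne]; norm_num)]
  rw [Monic.leadingCoeff ((hermite_monic q).map _), leadingCoeff_C_mul_X,
    natDegree_hermite_map, one_mul, ← pow_mul, mul_comm q 2, pow_mul]
  norm_num [neg_pow, Real.sq_sqrt]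

lemma Pq_eval (q : ℕ) (t : ℝ) :
    (Pq q).eval t = (Polynomial.aeval (-Real.sqrt 2 * t) (Polynomial.hermite q))^2 := by
  rw [Pq, eval_pow, eval_comp, eval_mul, eval_C, eval_X, eval_map, aeval_def, algebraMap_int_eq]

lemma hermiteH_neg_sq (q : ℕ) (t : ℝ) :
    (hermiteH q (-t))^2 = 2^q * (Pq q).eval t := by
  rw [hermiteH_eq, Pq_eval, mul_pow, ← pow_mul, mul_comm q 2, pow_mul,
    Real.sq_sqrt (by norm_num : (0:ℝ) ≤ 2)]
  rw [show Real.sqrt 2 * -t = -Real.sqrt 2 * t by ring]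


lemma integrable_poly_gauss (P : Polynomial ℝ) :
    Integrable (fun t : ℝ => P.eval t * Real.exp (-t^2)) := by
  have hmono : ∀ i : ℕ, Integrable (fun t : ℝ => P.coeff i * (t^i * Real.exp (-t^2))) := by
    intro i
    have h := integrable_rpow_mul_exp_neg_mul_sq (b := 1) one_pos
      (s := (i : ℝ)) (lt_of_lt_of_le neg_one_lt_zero (Nat.cast_nonneg i))
    simp only [Real.rpow_natCast, one_mul, neg_mul] at h
    exact h.const_mul _
  have : (fun t : ℝ => P.eval t * Real.exp (-t^2)) =
      fun t => ∑ i ∈ Finset.range (P.natDegree + 1), P.coeff i * (t^i * Real.exp (-t^2)) := by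
    funext t
    rw [Polynomial.eval_eq_sum_range, Finset.sum_mul]
    simp [mul_assoc]
  rw [this]
  exact integrable_finset_sum _ fun i _ => hmono i

lemma integral_Ioi_split (h : ℝ → ℝ) (hi : Integrable h) {K : ℝ} (hK : 0 ≤ K) :
    ∫ t in Ioi K, h t = (∫ t in Ioi 0, h t) - ∫ t in (0:ℝ)..K, h t := by
  have hu : Ioc 0 K ∪ Ioi K = Ioi (0:ℝ) := Ioc_union_Ioi_eq_Ioi hK
  have := setIntegral_union (Set.Ioc_disjoint_Ioi le_rfl) measurableSet_Ioi
    (hi.integrableOn (s := Ioc 0 K)) (hi.integrableOn (s := Ioi K))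
  rw [hu] at this
  rw [intervalIntegral.integral_of_le hK, this]
  ring

set_option maxHeartbeats 1000000 in
lemma tail_asymp (P : Polynomial ℝ) (hP : 0 < P.leadingCoeff) :
    Tendsto (fun K : ℝ => (∫ t in Ioi K, P.eval t * Real.exp (-t^2)) /
      (P.leadingCoeff / 2 * K ^ ((P.natDegree : ℝ) - 1) * Real.exp (-K^2)))
      atTop (nhds 1) := by
  set l := P.leadingCoeff with hl
  set n := P.natDegree with hn
  set r : ℝ := (n : ℝ) - 1 with hr
  set c : ℝ := l / 2 with hc
  have hc0 : 0 < c := by positivity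
  set h : ℝ → ℝ := fun t => P.eval t * Real.exp (-t^2) with hh
  have hint : Integrable h := integrable_poly_gauss P
  have hcont : Continuous h := (P.continuous).mul ((continuous_pow 2).neg.rexp)
  set C : ℝ := ∫ t in Ioi (0:ℝ), h t with hC
  set f₀ : ℝ → ℝ := fun K => C - ∫ t in (0:ℝ)..K, h t with hf₀
  set g : ℝ → ℝ := fun K => c * (K ^ r * Real.exp (-K^2)) with hg
  set g' : ℝ → ℝ := fun K =>
      c * (r * K ^ (r-1) * Real.exp (-K^2) + K ^ r * (Real.exp (-K^2) * (-(2 * K)))) with hg'd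
  -- derivative of f₀
  have hf₀' : ∀ K : ℝ, HasDerivAt f₀ (-h K) K := by
    intro K
    have hd : HasDerivAt (fun u : ℝ => ∫ t in (0:ℝ)..u, h t) (h K) K :=
      intervalIntegral.integral_hasDerivAt_right (hcont.intervalIntegrable _ _)
        (hcont.stronglyMeasurable.stronglyMeasurableAtFilter)
        hcont.continuousAt
    exact hd.const_sub C
  -- derivative of g
  have hgd : ∀ᶠ K in atTop, HasDerivAt g (g' K) K := by
    filter_upwards [eventually_gt_atTop (0:ℝ)] with K hK
    have h1 : HasDerivAt (fun x : ℝ => x ^ r) (r * K^(r-1)) K :=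
      Real.hasDerivAt_rpow_const (Or.inl hK.ne')
    have h2 : HasDerivAt (fun x : ℝ => Real.exp (-x^2)) (Real.exp (-K^2) * (-(2 * K))) K := by
      have h3 : HasDerivAt (fun x : ℝ => -x^2) (-(2*K)) K := by
        have := (hasDerivAt_pow 2 K).neg; simp at this; exact this
      exact h3.exp
    exact ((h1.mul h2).const_mul c)
  -- g' is eventually negative
  have hneg : ∀ᶠ K in atTop, g' K < 0 := by
    filter_upwards [eventually_gt_atTop (max 1 |r|)] with K hK
    have hK1 : 1 < K := lt_of_le_of_lt (le_max_left _ _) hK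
    have hKr : |r| < K := lt_of_le_of_lt (le_max_right _ _) hK
    have hK0 : (0:ℝ) < K := lt_trans one_pos hK1
    have p1 : (0:ℝ) < K^(r-1) := Real.rpow_pos_of_pos hK0 _
    have p2 : (0:ℝ) < K^r := Real.rpow_pos_of_pos hK0 _
    have e1 : K^(r-1) * K = K^r := by
      rw [← Real.rpow_add_one hK0.ne' (r-1)]; norm_num
    have hg'eq : g' K = c * Real.exp (-K^2) * (r * K^(r-1) - 2 * (K^r * K)) := by
      simp only [hg'd]; ring
    rw [hg'eq]
    have h3 : r * K^(r-1) - 2*(K^r*K) < 0 := by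
      nlinarith [le_abs_self r, mul_pos (sub_pos.2 hKr) p1,
        mul_nonneg (sub_nonneg.2 (le_abs_self r)) p1.le]
    exact mul_neg_of_pos_of_neg (by positivity) h3
  -- f₀ tends to 0
  have hftop : Tendsto f₀ atTop (nhds 0) := by
    have h1 := intervalIntegral_tendsto_integral_Ioi 0 (hint.integrableOn) tendsto_id
    have h2 := (tendsto_const_nhds (x := C)).sub h1
    rw [show C - ∫ t in Ioi (0:ℝ), h t = 0 from sub_self C] at h2
    exact h2
  -- g tends to 0
  have hgtop : Tendsto g atTop (nhds 0) := by
    apply squeeze_zero' (t₀ := atTop) (g := fun K => c * (K ^ r * Real.exp (-(1:ℝ)*K)))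
    · filter_upwards [eventually_ge_atTop (0:ℝ)] with K hK
      have : (0:ℝ) ≤ K ^ r := Real.rpow_nonneg hK r
      positivity
    · filter_upwards [eventually_ge_atTop (1:ℝ)] with K hK
      have h1 : Real.exp (-K^2) ≤ Real.exp (-(1:ℝ)*K) := by
        apply Real.exp_le_exp.2; nlinarith
      have : (0:ℝ) ≤ K ^ r := Real.rpow_nonneg (by linarith) r
      simp only [hg]
      nlinarith [mul_le_mul_of_nonneg_left h1 this]
    · simpa using (tendsto_rpow_mul_exp_neg_mul_atTop_nhds_zero r 1 one_pos).const_mul c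
  -- limit of f'/g'
  have hdiv : Tendsto (fun K => (-h K) / g' K) atTop (nhds 1) := by
    have hne : ∀ᶠ K : ℝ in atTop, l * K^n ≠ 0 := by
      filter_upwards [eventually_gt_atTop (0:ℝ)] with K hK
      exact (mul_pos hP (pow_pos hK n)).ne'
    have t1 : Tendsto (fun K : ℝ => P.eval K / (l * K^n)) atTop (nhds 1) := by
      have := (Asymptotics.isEquivalent_iff_tendsto_one hne).mp P.isEquivalent_atTop_lead
      simpa [Pi.div_def] using this
    have t2 : Tendsto (fun K : ℝ => l / (c * (2 - r / K^2))) atTop (nhds 1) := by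
      have h0 : Tendsto (fun K : ℝ => r / K^2) atTop (nhds 0) := by
        have h1 : Tendsto (fun K : ℝ => K^2) atTop atTop := tendsto_pow_atTop (by norm_num)
        have := h1.inv_tendsto_atTop.const_mul r
        simpa [div_eq_mul_inv, Function.comp] using this
      have hden : Tendsto (fun K : ℝ => c * (2 - r / K^2)) atTop (nhds (c * 2)) := by
        have := ((tendsto_const_nhds (x := (2:ℝ))).sub h0).const_mul c
        simpa using this
      have := (tendsto_const_nhds (x := l)).div hden (by positivity)
      convert this using 2
      rfl
      rw [hc]; field_simp [hP.ne']
    have claim : ∀ᶠ K in atTop,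
        (P.eval K / (l*K^n)) * (l / (c*(2 - r/K^2))) = (-h K) / g' K := by
      filter_upwards [eventually_gt_atTop (max 1 |r|)] with K hK
      have hK1 : 1 < K := lt_of_le_of_lt (le_max_left _ _) hK
      have hKr : |r| < K := lt_of_le_of_lt (le_max_right _ _) hK
      have hK0 : (0:ℝ) < K := lt_trans one_pos hK1
      have hE : Real.exp (-K^2) ≠ 0 := (Real.exp_pos _).ne'
      have hKn : (K:ℝ)^n ≠ 0 := (pow_pos hK0 n).ne'
      have hden2 : (0:ℝ) < 2 - r / K^2 := by
        have h1 : r < K^2 := by nlinarith [le_abs_self r]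
        have h2 : r / K^2 < 1 := (div_lt_one (by positivity)).2 h1
        linarith
      have e1 : K^(r-1) = K^n / K^2 := by
        rw [eq_div_iff (by positivity), ← Real.rpow_natCast K 2, ← Real.rpow_add hK0,
          ← Real.rpow_natCast K n]
        congr 1; ring
      have e2 : K^r = K^n / K := by
        rw [eq_div_iff hK0.ne', ← Real.rpow_add_one hK0.ne' r, ← Real.rpow_natCast K n]
        congr 1; ring
      have hg'form : g' K = -(c * Real.exp (-K^2) * ((2 - r/K^2) * K^n)) := by
        simp only [hg'd]; rw [e1, e2]; field_simp; ring
      have d1 : (l * K^n) * (c * (2 - r/K^2)) ≠ 0 :=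
        (mul_pos (mul_pos hP (pow_pos hK0 n)) (mul_pos hc0 hden2)).ne'
      have d2 : c * Real.exp (-K^2) * ((2 - r/K^2) * K^n) ≠ 0 :=
        (mul_pos (mul_pos hc0 (Real.exp_pos _)) (mul_pos hden2 (pow_pos hK0 n))).ne'
      simp only [hh, hg'form]
      rw [neg_div_neg_eq, div_mul_div_comm, div_eq_div_iff d1 d2]
      ring
    have := (t1.mul t2)
    rw [mul_one] at this
    exact this.congr' claim
  have hmain : Tendsto (fun K => f₀ K / g K) atTop (nhds 1) :=
    HasDerivAt.lhopital_zero_atTop (Eventually.of_forall hf₀') hgd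
      (hneg.mono fun K hK => hK.ne) hftop hgtop hdiv
  apply hmain.congr'
  filter_upwards [eventually_ge_atTop (0:ℝ)] with K hK
  rw [show f₀ K = ∫ t in Ioi K, h t from (integral_Ioi_split h hint hK).symm]
  simp only [hg, hh, hc]
  rw [mul_assoc]

set_option maxHeartbeats 1000000 in
lemma Phi_sq_eq (b : ℝ) (hb : 0 < b) (j : ℕ) (wm wp x₀ : ℝ) (hw : wm ≤ wp) (k : ℝ) :
    (Phi b (fun x => if x₀ ≤ x then wp else wm) wp j k)^2 =
      (wp - wm) / (Real.sqrt Real.pi * (j-1).factorial) *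
        ∫ t in Ioi (k / Real.sqrt b - Real.sqrt b * x₀),
          (Pq (j-1)).eval t * Real.exp (-t^2) := by
  have hsb : 0 < Real.sqrt b := Real.sqrt_pos.2 hb
  set sb := Real.sqrt b with hsbd
  have hsbsq : sb * sb = b := Real.mul_self_sqrt hb.le
  set q := j - 1 with hq
  set K := k / sb - sb * x₀ with hK
  set N : ℝ := Real.sqrt Real.pi * 2^q * q.factorial with hN
  have hπ : (0:ℝ) < Real.sqrt Real.pi := Real.sqrt_pos.2 Real.pi_pos
  have hN0 : (0:ℝ) < N := by
    have : (0:ℝ) < (q.factorial : ℝ) := by exact_mod_cast q.factorial_pos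
    positivity
  set g₁ : ℝ → ℝ := Set.indicator (Ioi K) (fun t => (wp - wm) * (hermFun j (-t))^2) with hg₁
  have step0 : ∀ x : ℝ, (wp - (if x₀ ≤ x + k/b then wp else wm)) * sb * (hermFun j (sb*x))^2
      = sb * g₁ (-sb * x) := by
    intro x
    have hkb : k / b = (k / sb) / sb := by rw [div_div, hsbsq]
    have hiff : K < -sb*x ↔ x + k/b < x₀ := by
      have h1 : (x + k/b < x₀) ↔ sb * (x + k/b) < sb * x₀ := (mul_lt_mul_iff_right₀ hsb).symm
      have h2 : sb * (x + k/b) = sb*x + k/sb := by rw [hkb]; field_simp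
      rw [h1, h2, hK]
      constructor <;> intro <;> linarith
    by_cases hx : x₀ ≤ x + k/b
    · rw [if_pos hx, hg₁]
      rw [show ((Ioi K).indicator (fun t => (wp - wm) * hermFun j (-t) ^ 2) (-sb * x)) = 0 from
        Set.indicator_of_notMem (fun hmem => not_lt.2 hx (hiff.1 hmem)) _]
      ring
    · rw [if_neg hx, hg₁]
      rw [show ((Ioi K).indicator (fun t => (wp - wm) * hermFun j (-t) ^ 2) (-sb * x)) =
          (wp - wm) * hermFun j (-(-sb * x)) ^ 2 from
        Set.indicator_of_mem (hiff.2 (not_le.1 hx)) _]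
      have hnn : -(-sb * x) = sb * x := by ring
      rw [hnn]
      ring
  have step1 : (Phi b (fun x => if x₀ ≤ x then wp else wm) wp j k)^2 =
      ∫ x : ℝ, (wp - (if x₀ ≤ x + k/b then wp else wm)) * sb * (hermFun j (sb*x))^2 := by
    rw [Phi, Real.sq_sqrt]
    apply integral_nonneg
    intro x
    have h1 : 0 ≤ wp - (if x₀ ≤ x + k/b then wp else wm) := by
      split_ifs <;> simp [hw]
    positivity
  rw [step1]
  calc ∫ x : ℝ, (wp - (if x₀ ≤ x + k/b then wp else wm)) * sb * (hermFun j (sb*x))^2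
      = ∫ x : ℝ, sb * g₁ ((-sb) * x) := by
        congr 1; funext x
        rw [← step0 x]
    _ = sb * ∫ x : ℝ, g₁ ((-sb) * x) := by rw [integral_const_mul]
    _ = sb * (|(-sb)⁻¹| • ∫ t : ℝ, g₁ t) := by rw [MeasureTheory.Measure.integral_comp_mul_left g₁ (-sb)]
    _ = ∫ t : ℝ, g₁ t := by
        rw [smul_eq_mul, abs_inv, abs_neg, abs_of_pos hsb]
        field_simp
    _ = ∫ t in Ioi K, (wp - wm) * (hermFun j (-t))^2 := by
        rw [hg₁, integral_indicator measurableSet_Ioi]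
    _ = ∫ t in Ioi K, (wp - wm) / (Real.sqrt Real.pi * q.factorial) *
          ((Pq q).eval t * Real.exp (-t^2)) := by
        congr 1; funext t
        rw [hermFun]
        rw [div_pow, mul_pow, Real.sq_sqrt hN0.le]
        rw [show Real.exp (-((-t)^2)/2)^2 = Real.exp (-t^2) by
          rw [sq, ← Real.exp_add]; congr 1; rw [neg_sq]; ring]
        rw [← hq, hermiteH_neg_sq]
        rw [hN]
        have h2q : (0:ℝ) < 2^q := by positivity
        have hf : (0:ℝ) < (q.factorial : ℝ) := by exact_mod_cast q.factorial_pos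
        field_simp
    _ = (wp - wm) / (Real.sqrt Real.pi * q.factorial) *
          ∫ t in Ioi K, (Pq q).eval t * Real.exp (-t^2) := by
        rw [integral_const_mul]

end Helpers

set_option maxHeartbeats 1000000 in
/-- For the step edge potential `w`, one has
`Φ_j(k;w)² = ((w₊-w₋)/2) p_j k^{2j-3} e^{-(b^{-1/2}k - b^{1/2}x₀)²} (1 + o(1))` as `k → +∞`. -/
theorem Phi_step_asymptotics (b : ℝ) (hb : 0 < b) (j : ℕ) (hj : 1 ≤ j)
    (wm wp x₀ : ℝ) (hw : wm < wp) :
    Tendsto (fun k : ℝ =>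
        (Phi b (fun x => if x₀ ≤ x then wp else wm) wp j k)^2 /
          (((wp - wm) / 2) * pj b j * k ^ (2 * (j:ℝ) - 3) *
            Real.exp (-(k / Real.sqrt b - Real.sqrt b * x₀)^2)))
      atTop (nhds 1) := by
  have hsb : 0 < Real.sqrt b := Real.sqrt_pos.2 hb
  set sb := Real.sqrt b with hsbd
  have hsbsq : sb * sb = b := Real.mul_self_sqrt hb.le
  set q := j - 1 with hq
  have hjq : j = q + 1 := (Nat.succ_pred_eq_of_pos hj).symm
  have hjr : (j : ℝ) = (q : ℝ) + 1 := by rw [hjq]; push_cast; ring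
  set r' : ℝ := 2 * (j:ℝ) - 3 with hr'
  have hrq : ((2 * q : ℕ) : ℝ) - 1 = r' := by push_cast [hr', hjr]; ring
  set Kf : ℝ → ℝ := fun k => k / sb - sb * x₀ with hKf
  have hπ : (0:ℝ) < Real.sqrt Real.pi := Real.sqrt_pos.2 Real.pi_pos
  have hfac : (0:ℝ) < (q.factorial : ℝ) := by exact_mod_cast q.factorial_pos
  have hA : (0:ℝ) < wp - wm := sub_pos.2 hw
  -- tendsto of Kf
  have hKtend : Tendsto Kf atTop atTop := by
    apply tendsto_atTop_add_const_right atTop (-(sb * x₀))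
    exact Tendsto.atTop_div_const hsb tendsto_id
  -- main tail limit, composed
  have T1 : Tendsto (fun k : ℝ =>
      (∫ t in Ioi (Kf k), (Pq q).eval t * Real.exp (-t^2)) /
        ((2:ℝ)^q / 2 * (Kf k) ^ r' * Real.exp (-(Kf k)^2))) atTop (nhds 1) := by
    have h0 := tail_asymp (Pq q) (by rw [Pq_leadingCoeff]; positivity)
    simp only [Pq_natDegree, Pq_leadingCoeff, hrq] at h0
    exact h0.comp hKtend
  -- second factor
  have T2 : Tendsto (fun k : ℝ => (1 - b * x₀ / k) ^ r') atTop (nhds 1) := by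
    have h1 : Tendsto (fun k : ℝ => 1 - b * x₀ / k) atTop (nhds 1) := by
      have h2 := tendsto_inv_atTop_zero (𝕜 := ℝ)
      have h3 := (h2.const_mul (b * x₀)).const_sub 1
      simpa [div_eq_mul_inv] using h3
    have := h1.rpow_const (p := r') (Or.inl one_ne_zero)
    simpa using this
  have Tprod := T1.mul T2
  rw [mul_one] at Tprod
  apply Tprod.congr'
  filter_upwards [eventually_gt_atTop (0:ℝ), eventually_gt_atTop (b * x₀)] with k hk0 hkbx
  have hKpos : 0 < Kf k := by
    rw [hKf]
    have : sb * x₀ < k / sb := by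
      rw [lt_div_iff₀ hsb]
      nlinarith
    simpa [sub_pos] using this
  have h1 : sb * Kf k = k - b * x₀ := by
    rw [hKf]
    field_simp
    nlinarith [hsbsq]
  have hsbK : 1 - b * x₀ / k = sb * Kf k / k := by
    rw [h1]; field_simp
  have e3 : (sb * Kf k / k) ^ r' = sb ^ r' * (Kf k) ^ r' / k ^ r' := by
    rw [Real.div_rpow (by positivity) hk0.le, Real.mul_rpow hsb.le hKpos.le]
  have hsbr : (0:ℝ) < sb ^ r' := Real.rpow_pos_of_pos hsb _
  have e4 : sb ^ r' * b ^ ((3:ℝ)/2 - (j:ℝ)) = 1 := by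
    rw [hsbd, Real.sqrt_eq_rpow, ← Real.rpow_mul hb.le, ← Real.rpow_add hb]
    rw [show (1:ℝ)/2 * r' + ((3:ℝ)/2 - (j:ℝ)) = 0 by rw [hr']; push_cast; ring]
    exact Real.rpow_zero b
  have e4' : b ^ ((3:ℝ)/2 - (j:ℝ)) = (sb ^ r')⁻¹ := by
    exact eq_inv_of_mul_eq_one_right e4
  rw [Phi_sq_eq b hb j wm wp x₀ hw.le k, pj, hsbK, e3, e4']
  simp only [hKf, hsbd, hq] at *
  set E := Real.exp (-(k / Real.sqrt b - Real.sqrt b * x₀)^2) with hEd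
  set F := ∫ t in Ioi (k / Real.sqrt b - Real.sqrt b * x₀),
      Polynomial.eval t (Pq (j-1)) * Real.exp (-t^2) with hFd
  set KR := (k / Real.sqrt b - Real.sqrt b * x₀) ^ r' with hKRd
  set kR := k ^ r' with hkRd
  set sbr := Real.sqrt b ^ r' with hsbrd
  have hE : (0:ℝ) < E := Real.exp_pos _
  have hKR : (0:ℝ) < KR := Real.rpow_pos_of_pos hKpos _
  field_simp
end

section
/- Let b > 0 and let j ≥ 1 be an integer. Then there exist polynomials P_{l,j} for 0 ≤ l ≤ j−1, with deg P_{l,j} ≤ l and P_{0,j} = 1, such that for all x, k ∈ ℝ: ψ_{j,∞}(x;k) = p_j^{1/2} Σ_{l=0}^{j−1} P_{l,j}(x) (−k)^{j−1−l} e^{−(b^{−1/2}k − b^{1/2}x)²/2}. -/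
open MeasureTheory Filter Set

/-- `ψ_{j,∞}(x;k) = b^{1/4} φ_j(b^{1/2} x - b^{-1/2} k)`. -/
noncomputable def psiInf (b : ℝ) (j : ℕ) (x k : ℝ) : ℝ :=
  b ^ ((1:ℝ)/4) * hermFun j (Real.sqrt b * x - k / Real.sqrt b)

noncomputable def Hp : ℕ → Polynomial ℝ
  | 0 => 1
  | (n+1) => Polynomial.C 2 * Polynomial.X * Hp n - Polynomial.derivative (Hp n)

lemma iter_eq (n : ℕ) : iteratedDeriv n (fun y => Real.exp (-(y^2))) =
    fun x => (-1)^n * (Hp n).eval x * Real.exp (-(x^2)) := by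
  induction n with
  | zero => funext x; simp [Hp]
  | succ n ih =>
    funext x
    rw [iteratedDeriv_succ, ih]
    have h1 : HasDerivAt (fun y : ℝ => -(y^2)) (-(2*x)) x := by
      exact ((hasDerivAt_pow 2 x).neg).congr_deriv (by simp)
    have h2 : HasDerivAt (fun y : ℝ => Real.exp (-(y^2))) (Real.exp (-(x^2)) * (-(2*x))) x :=
      h1.exp
    have h3 : HasDerivAt (fun y : ℝ => (-1:ℝ)^n * (Hp n).eval y * Real.exp (-(y^2)))
        ((-1)^n * ((Polynomial.derivative (Hp n)).eval x * Real.exp (-(x^2)) +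
          (Hp n).eval x * (Real.exp (-(x^2)) * (-(2*x))))) x := by
      have := (((Hp n).hasDerivAt x).mul h2)
      simpa [mul_assoc, mul_comm, mul_left_comm] using this.const_mul ((-1:ℝ)^n)
    rw [h3.deriv]
    simp only [Hp, Polynomial.eval_sub, Polynomial.eval_mul, Polynomial.eval_C,
      Polynomial.eval_X, pow_succ]
    ring

lemma hermiteH_eq_s7 (n : ℕ) (x : ℝ) : hermiteH n x = (Hp n).eval x := by
  rw [hermiteH, iter_eq]
  have : Real.exp (x^2) * Real.exp (-(x^2)) = 1 := by
    rw [← Real.exp_add]; simp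
  have hsq : ((-1:ℝ)^n)^2 = 1 := by
    rcases neg_one_pow_eq_or ℝ n with h | h <;> rw [h] <;> norm_num
  show (-1:ℝ)^n * Real.exp (x^2) * ((-1)^n * (Hp n).eval x * Real.exp (-(x^2))) = _
  calc (-1:ℝ)^n * Real.exp (x^2) * ((-1)^n * (Hp n).eval x * Real.exp (-(x^2)))
      = ((-1:ℝ)^n)^2 * (Real.exp (x^2) * Real.exp (-(x^2))) * (Hp n).eval x := by ring
    _ = (Hp n).eval x := by rw [hsq, this]; ring

lemma natDegree_Hp_le (n : ℕ) : (Hp n).natDegree ≤ n := by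
  induction n with
  | zero => simp [Hp]
  | succ n ih =>
    rw [Hp]
    refine le_trans (Polynomial.natDegree_sub_le _ _) (max_le ?_ ?_)
    · refine le_trans (Polynomial.natDegree_mul_le) ?_
      have : (Polynomial.C (2:ℝ) * Polynomial.X).natDegree ≤ 1 := by
        refine le_trans (Polynomial.natDegree_mul_le) ?_
        simp
      omega
    · have := Polynomial.natDegree_derivative_le (Hp n)
      omega

lemma coeff_Hp (n : ℕ) : (Hp n).coeff n = 2^n := by
  induction n with
  | zero => simp [Hp]
  | succ n ih =>
    rw [Hp]
    have h1 : (Polynomial.C (2:ℝ) * Polynomial.X * Hp n).coeff (n+1) = 2 * (Hp n).coeff n := by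
      rw [mul_assoc, Polynomial.coeff_C_mul, Polynomial.coeff_X_mul]
    have h2 : (Polynomial.derivative (Hp n)).coeff (n+1) = 0 := by
      rw [Polynomial.coeff_derivative]
      rw [Polynomial.coeff_eq_zero_of_natDegree_lt (lt_of_le_of_lt (natDegree_Hp_le n) (by omega))]
      ring
    rw [Polynomial.coeff_sub, h1, h2, ih]
    ring

lemma natDegree_Hp (n : ℕ) : (Hp n).natDegree = n := by
  refine le_antisymm (natDegree_Hp_le n) ?_
  apply Polynomial.le_natDegree_of_ne_zero
  rw [coeff_Hp]
  positivity


lemma hasseDeriv_Hp_top (n : ℕ) : Polynomial.hasseDeriv n (Hp n) = Polynomial.C ((2:ℝ)^n) := by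
  ext i
  rw [Polynomial.hasseDeriv_coeff]
  cases i with
  | zero => rw [Polynomial.coeff_C]; simp [coeff_Hp]
  | succ m =>
    rw [Polynomial.coeff_eq_zero_of_natDegree_lt (by rw [natDegree_Hp]; omega),
      Polynomial.coeff_C]
    simp

lemma const_eq (b : ℝ) (hb : 0 < b) (n : ℕ) :
    Real.sqrt (pj b (n+1)) * Real.sqrt b ^ n *
      Real.sqrt (Real.sqrt Real.pi * 2^n * (n.factorial : ℝ)) = b ^ ((1:ℝ)/4) * 2^n := by
  have hπ : (0:ℝ) < Real.sqrt Real.pi := Real.sqrt_pos.mpr Real.pi_pos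
  have hfac : (0:ℝ) < (n.factorial : ℝ) := by exact_mod_cast n.factorial_pos
  have hA0 : (0:ℝ) < Real.sqrt Real.pi * 2^n * (n.factorial : ℝ) := by positivity
  have hsb : (0:ℝ) < Real.sqrt b := Real.sqrt_pos.mpr hb
  have hbn : Real.sqrt b ^ n * Real.sqrt b ^ n = b ^ (n : ℝ) := by
    rw [← mul_pow, Real.mul_self_sqrt hb.le, ← Real.rpow_natCast]
  have hb14 : b ^ ((1:ℝ)/4) * b ^ ((1:ℝ)/4) = b ^ ((1:ℝ)/2) := by
    rw [← Real.rpow_add hb]; norm_num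
  have hexp : b ^ ((3:ℝ)/2 - ((n+1 : ℕ) : ℝ)) = b ^ ((1:ℝ)/2) / b ^ (n : ℝ) := by
    rw [← Real.rpow_sub hb]
    congr 1
    push_cast
    ring
  have hc : pj b (n+1) =
      (b ^ ((1:ℝ)/4) * 2^n / (Real.sqrt b ^ n *
        Real.sqrt (Real.sqrt Real.pi * 2^n * (n.factorial : ℝ))))^2 := by
    rw [pj]
    simp only [Nat.add_sub_cancel]
    rw [hexp, div_pow]
    simp only [mul_pow]
    rw [show (Real.sqrt b ^ n)^2 = b ^ (n:ℝ) from by rw [sq]; exact hbn]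
    rw [Real.sq_sqrt hA0.le]
    rw [show (b ^ ((1:ℝ)/4))^2 = b ^ ((1:ℝ)/2) from by rw [sq]; exact hb14]
    rw [div_eq_div_iff (by positivity) (by positivity)]
    have hbn0 : b ^ ((n:ℕ):ℝ) ≠ 0 := (Real.rpow_pos_of_pos hb _).ne'
    field_simp
  rw [hc, Real.sqrt_sq (by positivity)]
  have hAne : Real.sqrt (Real.sqrt Real.pi * 2^n * (n.factorial : ℝ)) ≠ 0 := by positivity
  have hsbn : Real.sqrt b ^ n ≠ 0 := by positivity
  field_simp

/-- Expansion of `ψ_{j,∞}`: there are polynomials `P_{l,j}`, `deg P_{l,j} ≤ l`, `P_{0,j} = 1`,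
with `ψ_{j,∞}(x;k) = p_j^{1/2} ∑_{l=0}^{j-1} P_{l,j}(x) (-k)^{j-1-l} e^{-(b^{-1/2}k - b^{1/2}x)²/2}`. -/
theorem psiInf_expansion (b : ℝ) (hb : 0 < b) (j : ℕ) (hj : 1 ≤ j) :
    ∃ P : ℕ → Polynomial ℝ,
      (∀ l, l ≤ j - 1 → (P l).degree ≤ (l : ℕ)) ∧ P 0 = 1 ∧
      ∀ x k : ℝ, psiInf b j x k =
        Real.sqrt (pj b j) * ∑ l ∈ Finset.range j,
          (P l).eval x * (-k)^(j-1-l) *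
            Real.exp (-(k / Real.sqrt b - Real.sqrt b * x)^2 / 2) := by
  obtain ⟨n, rfl⟩ := Nat.exists_eq_succ_of_ne_zero (Nat.one_le_iff_ne_zero.mp hj)
  have hsb : (0:ℝ) < Real.sqrt b := Real.sqrt_pos.mpr hb
  refine ⟨fun l => Polynomial.C (Real.sqrt b ^ l / 2^n) *
      ((Polynomial.hasseDeriv (n - l) (Hp n)).comp
        (Polynomial.C (Real.sqrt b) * Polynomial.X)), ?_, ?_, ?_⟩
  · intro l hl
    rw [← Polynomial.natDegree_le_iff_degree_le]
    refine le_trans (Polynomial.natDegree_mul_le) ?_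
    rw [Polynomial.natDegree_C, zero_add]
    refine le_trans (Polynomial.natDegree_comp_le) ?_
    have h1 : (Polynomial.hasseDeriv (n-l) (Hp n)).natDegree ≤ l := by
      refine le_trans (Polynomial.natDegree_hasseDeriv_le _ _) ?_
      rw [natDegree_Hp]; omega
    have h2 : (Polynomial.C (Real.sqrt b) * Polynomial.X).natDegree ≤ 1 :=
      le_trans Polynomial.natDegree_mul_le (by simp)
    calc (Polynomial.hasseDeriv (n-l) (Hp n)).natDegree *
          (Polynomial.C (Real.sqrt b) * Polynomial.X).natDegree ≤ l * 1 :=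
        Nat.mul_le_mul h1 h2
      _ = l := by ring
  · simp only [Nat.sub_zero, hasseDeriv_Hp_top, Polynomial.C_comp, pow_zero, ← Polynomial.C_mul]
    rw [show (1:ℝ) / 2^n * 2^n = 1 from by field_simp]
    exact Polynomial.C_1
  · intro x k
    set sb := Real.sqrt b with hsbdef
    set s := sb * x - k / sb with hs
    have hs_eval : (Hp n).eval s = ∑ l ∈ Finset.range (n+1),
        (Polynomial.hasseDeriv (n - l) (Hp n)).eval (sb * x) * (-(k/sb))^(n - l) := by
      have h0 : s = -(k/sb) + sb*x := by rw [hs]; ring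
      rw [h0, ← Polynomial.taylor_eval]
      rw [Polynomial.eval_eq_sum_range'
        (by rw [Polynomial.natDegree_taylor, natDegree_Hp]; omega : ((Polynomial.taylor (sb*x)) (Hp n)).natDegree < n+1)]
      rw [← Finset.sum_range_reflect]
      refine Finset.sum_congr rfl ?_
      intro l hl
      rw [Polynomial.taylor_coeff]
      simp only [Nat.add_sub_cancel]
    have hE : Real.exp (-(k / sb - sb * x)^2 / 2) = Real.exp (-(s^2)/2) := by
      congr 1
      rw [hs]; ring
    unfold psiInf hermFun
    simp only [Nat.succ_sub_one]
    rw [hermiteH_eq_s7, hs_eval, hE, Finset.mul_sum, Finset.sum_mul, Finset.sum_div,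
      Finset.mul_sum]
    refine Finset.sum_congr rfl ?_
    intro l hl
    simp only [Finset.mem_range] at hl
    have hll : l ≤ n := by omega
    set A : ℝ := Real.sqrt Real.pi * 2^n * (n.factorial : ℝ) with hA
    have hA0 : (0:ℝ) < A := by
      have := Real.pi_pos
      positivity
    have hconst := const_eq b hb n
    simp only [Polynomial.eval_mul, Polynomial.eval_C, Polynomial.eval_comp, Polynomial.eval_X]
    set h := (Polynomial.hasseDeriv (n - l) (Hp n)).eval (sb * x) with hh
    set E := Real.exp (-(s^2)/2) with hEdef
    obtain ⟨m, hm⟩ : ∃ m, n - l = m := ⟨n - l, rfl⟩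
    have hlm : l + m = n := by omega
    rw [hm]
    have ht : (-(k/sb))^m = (-k)^m / sb^m := by
      rw [← neg_div, div_pow]
    rw [ht]
    have h2n : ((2:ℝ))^n ≠ 0 := by positivity
    have hsA : Real.sqrt A ≠ 0 := by positivity
    have hsbm : sb^m ≠ 0 := by positivity
    have hconst' : Real.sqrt (pj b (n+1)) * (sb^l * sb^m) * Real.sqrt A = b ^ ((1:ℝ)/4) * 2^n := by
      rw [← pow_add, hlm]
      exact hconst
    field_simp
    linear_combination (-(h * k^m * E * (-1)^m)) * hconst'
end

section
/- Let R > 0, m > 0 and k, k' ∈ ℝ. Then ∫_{B_R(0)} e^{m(zk + z̄k')} dμ(z) = π R² Σ_{q=0}^∞ (m² R² k k')^q / ((q!)² (q+1)), where B_R(0) ⊂ ℂ is the open disk of radius R centered at 0, z̄ denotes complex conjugation, and μ is the Lebesgue (area) measure on ℂ ≅ ℝ². -/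
open MeasureTheory Filter Set
open scoped Real Nat

noncomputable section

lemma key_polar (j l : ℕ) (p : ℝ × ℝ) :
    p.1 • ((Complex.polarCoord.symm p) ^ j *
        ((starRingEnd ℂ) (Complex.polarCoord.symm p)) ^ l)
      = ((p.1 ^ (j + l + 1) : ℝ) : ℂ) *
          Complex.exp ((((j : ℂ) - (l : ℂ)) * Complex.I) * p.2) := by
  rw [Complex.polarCoord_symm_apply]
  have h1 : ((Real.cos p.2 : ℂ) + (Real.sin p.2 : ℂ) * Complex.I)
      = Complex.exp ((p.2 : ℂ) * Complex.I) := by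
    rw [Complex.exp_mul_I, Complex.ofReal_cos, Complex.ofReal_sin]
  rw [h1]
  have h2 : (starRingEnd ℂ) ((p.1 : ℂ) * Complex.exp ((p.2 : ℂ) * Complex.I))
      = (p.1 : ℂ) * Complex.exp (-((p.2 : ℂ) * Complex.I)) := by
    rw [map_mul, Complex.conj_ofReal, ← Complex.exp_conj]
    congr 1
    simp [Complex.conj_ofReal]
  rw [h2, Complex.real_smul]
  have h3 : Complex.exp ((p.2:ℂ)*Complex.I)^j * Complex.exp (-((p.2:ℂ)*Complex.I))^l
      = Complex.exp ((((j : ℂ) - (l : ℂ)) * Complex.I) * p.2) := by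
    rw [← Complex.exp_nat_mul, ← Complex.exp_nat_mul, ← Complex.exp_add]
    ring_nf
  rw [mul_pow, mul_pow]
  rw [show ((p.1:ℂ))^j * Complex.exp ((p.2:ℂ)*Complex.I)^j *
      (((p.1:ℂ))^l * Complex.exp (-((p.2:ℂ)*Complex.I))^l)
    = ((p.1:ℂ))^(j+l) * (Complex.exp ((p.2:ℂ)*Complex.I)^j *
        Complex.exp (-((p.2:ℂ)*Complex.I))^l) by rw [pow_add]; ring]
  rw [h3]
  push_cast
  ring

lemma angular (j l : ℕ) :
    (∫ θ in Ioo (-π) π, Complex.exp ((((j : ℂ) - (l : ℂ)) * Complex.I) * θ))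
      = if j = l then ((2 * π : ℝ) : ℂ) else 0 := by
  set c : ℂ := ((j : ℂ) - (l : ℂ)) * Complex.I with hc
  rcases eq_or_ne j l with h | h
  · simp only [h, if_pos rfl, hc, sub_self, zero_mul]
    simp only [zero_mul, Complex.exp_zero]
    rw [setIntegral_const]
    rw [measureReal_def, Real.volume_Ioo]
    rw [show π - -π = 2 * π by ring]
    rw [ENNReal.toReal_ofReal (by positivity)]
    simp [Complex.real_smul]
  · rw [if_neg h]
    have hne : ((j : ℂ) - (l : ℂ)) ≠ 0 := by
      intro hcon
      apply h
      have := sub_eq_zero.mp hcon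
      exact_mod_cast this
    have hcne : c ≠ 0 := mul_ne_zero hne Complex.I_ne_zero
    rw [← integral_Ioc_eq_integral_Ioo,
      ← intervalIntegral.integral_of_le (by linarith [Real.pi_pos] : -π ≤ π)]
    rw [integral_exp_mul_complex hcne]
    set n : ℤ := (j : ℤ) - l with hn
    have h1 : c * (π : ℂ) = (n : ℂ) * ((π : ℂ) * Complex.I) := by
      rw [hc, hn]; push_cast; ring
    have h2 : c * ((-π : ℝ) : ℂ) = (-n : ℂ) * ((π : ℂ) * Complex.I) := by
      rw [hc, hn]; push_cast; ring
    rw [h1, h2]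
    have e1 : Complex.exp ((n : ℂ) * ((π : ℂ) * Complex.I)) = (-1 : ℂ) ^ n := by
      rw [Complex.exp_int_mul, Complex.exp_pi_mul_I]
    have e2 : Complex.exp (-(n : ℂ) * ((π : ℂ) * Complex.I)) = (-1 : ℂ) ^ (-n) := by
      rw [show (-(n : ℂ)) = ((-n : ℤ) : ℂ) by push_cast; ring,
        Complex.exp_int_mul, Complex.exp_pi_mul_I]
    rw [e1, e2]
    have hsq : (-1 : ℂ) ^ n * (-1 : ℂ) ^ n = 1 := by
      rw [← mul_zpow]; norm_num
    rw [zpow_neg, inv_eq_of_mul_eq_one_right hsq, sub_self, zero_div]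

lemma integrableOn_ball_cont {f : ℂ → ℂ} (hf : Continuous f) (R : ℝ) :
    IntegrableOn f (Metric.ball (0:ℂ) R) :=
  ((hf.continuousOn.integrableOn_compact (isCompact_closedBall (0:ℂ) R))).mono_set
    Metric.ball_subset_closedBall

lemma integral_monomial (R : ℝ) (hR : 0 < R) (j l : ℕ) :
    (∫ z in Metric.ball (0:ℂ) R, z ^ j * (starRingEnd ℂ) z ^ l)
      = ((R ^ (j + l + 2) / (j + l + 2) : ℝ) : ℂ) *
          (if j = l then ((2 * π : ℝ) : ℂ) else 0) := by
  set F : ℂ → ℂ := fun z => z ^ j * (starRingEnd ℂ) z ^ l with hF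
  have h0 : (∫ z in Metric.ball (0:ℂ) R, F z)
      = ∫ z, (Metric.ball (0:ℂ) R).indicator F z :=
    (integral_indicator measurableSet_ball).symm
  rw [h0, ← Complex.integral_comp_polarCoord_symm
    (fun z => (Metric.ball (0:ℂ) R).indicator F z), polarCoord_target]
  have hT : MeasurableSet {p : ℝ × ℝ | p.1 < R} :=
    measurableSet_lt measurable_fst measurable_const
  have hcong : ∀ p ∈ Ioi (0:ℝ) ×ˢ Ioo (-π) π,
      p.1 • (Metric.ball (0:ℂ) R).indicator F (Complex.polarCoord.symm p)
        = ({p : ℝ × ℝ | p.1 < R}).indicator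
            (fun p => p.1 • F (Complex.polarCoord.symm p)) p := by
    intro p hp
    have hp1 : 0 < p.1 := hp.1
    have hmem : Complex.polarCoord.symm p ∈ Metric.ball (0:ℂ) R ↔ p.1 < R := by
      rw [Metric.mem_ball, dist_zero_right,
        Complex.norm_polarCoord_symm, abs_of_pos hp1]
    by_cases h : p.1 < R
    · rw [Set.indicator_of_mem (hmem.mpr h),
        Set.indicator_of_mem (show p ∈ {p : ℝ × ℝ | p.1 < R} from h)]
    · rw [Set.indicator_of_notMem (fun hm => h (hmem.mp hm)),
        Set.indicator_of_notMem (show p ∉ {p : ℝ × ℝ | p.1 < R} from h), smul_zero]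
  rw [setIntegral_congr_fun (measurableSet_Ioi.prod measurableSet_Ioo) hcong,
    setIntegral_indicator hT]
  have hset : (Ioi (0:ℝ) ×ˢ Ioo (-π) π) ∩ {p : ℝ × ℝ | p.1 < R}
      = Ioo (0:ℝ) R ×ˢ Ioo (-π) π := by
    ext p
    simp only [Set.mem_inter_iff, Set.mem_prod, Set.mem_Ioi, Set.mem_Ioo,
      Set.mem_setOf_eq]
    tauto
  rw [hset]
  simp only [hF]
  simp only [key_polar]
  rw [Measure.volume_eq_prod, setIntegral_prod_mul
    (fun r : ℝ => ((r ^ (j + l + 1) : ℝ) : ℂ))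
    (fun θ : ℝ => Complex.exp ((((j : ℂ) - (l : ℂ)) * Complex.I) * (θ : ℂ)))]
  rw [angular]
  congr 1
  have hro : (∫ x in Ioo (0:ℝ) R, ((x ^ (j + l + 1) : ℝ) : ℂ))
      = ((∫ x in Ioo (0:ℝ) R, x ^ (j + l + 1) : ℝ) : ℂ) := by
    exact integral_ofReal
  rw [hro, ← integral_Ioc_eq_integral_Ioo,
    ← intervalIntegral.integral_of_le hR.le, integral_pow,
    zero_pow (by omega : j + l + 1 + 1 ≠ 0)]
  push_cast
  ring_nf

lemma integral_pow_term (R m k k' : ℝ) (hR : 0 < R) (n : ℕ) :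
    (∫ z in Metric.ball (0:ℂ) R,
        ((m : ℂ) * (z * (k : ℂ) + (starRingEnd ℂ) z * (k' : ℂ))) ^ n)
      = ∑ j ∈ Finset.range (n+1),
          ((m:ℂ)^n * (k:ℂ)^j * (k':ℂ)^(n-j) * (n.choose j : ℂ)) *
            (((R ^ (n + 2) / (n + 2) : ℝ) : ℂ) *
              (if j = n - j then ((2*π:ℝ):ℂ) else 0)) := by
  have hexpand : ∀ z : ℂ,
      ((m : ℂ) * (z * (k : ℂ) + (starRingEnd ℂ) z * (k' : ℂ))) ^ n
        = ∑ j ∈ Finset.range (n+1),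
            ((m:ℂ)^n * (k:ℂ)^j * (k':ℂ)^(n-j) * (n.choose j : ℂ)) *
              (z ^ j * (starRingEnd ℂ) z ^ (n-j)) := by
    intro z
    rw [mul_pow, add_pow, Finset.mul_sum]
    refine Finset.sum_congr rfl fun j hj => ?_
    rw [mul_pow, mul_pow]
    ring
  simp only [hexpand]
  rw [integral_finset_sum]
  · refine Finset.sum_congr rfl fun j hj => ?_
    have hj' : j ≤ n := Nat.lt_succ_iff.mp (Finset.mem_range.mp hj)
    rw [integral_const_mul, integral_monomial R hR j (n-j),
      show j + (n - j) = n by omega,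
      show (j:ℝ) + ((n - j : ℕ) : ℝ) = (n:ℝ) from by
        exact_mod_cast (by omega : j + (n-j) = n)]
  · intro j hj
    refine Integrable.const_mul ?_ _
    refine integrableOn_ball_cont ?_ R
    have : Continuous fun z : ℂ => (starRingEnd ℂ) z := Complex.continuous_conj
    continuity

lemma term_odd (R m k k' : ℝ) (hR : 0 < R) (q : ℕ) :
    (∫ z in Metric.ball (0:ℂ) R,
        ((m : ℂ) * (z * (k : ℂ) + (starRingEnd ℂ) z * (k' : ℂ))) ^ (2*q+1)
          / ((2*q+1)! : ℂ)) = 0 := by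
  rw [integral_div, integral_pow_term R m k k' hR]
  rw [Finset.sum_eq_zero, zero_div]
  intro j hj
  have hj' : j ≤ 2*q+1 := Nat.lt_succ_iff.mp (Finset.mem_range.mp hj)
  rw [if_neg (by omega : ¬ j = 2*q+1 - j), mul_zero, mul_zero]

lemma term_even (R m k k' : ℝ) (hR : 0 < R) (q : ℕ) :
    (∫ z in Metric.ball (0:ℂ) R,
        ((m : ℂ) * (z * (k : ℂ) + (starRingEnd ℂ) z * (k' : ℂ))) ^ (2*q)
          / ((2*q)! : ℂ))
      = ((π * R^2 * (m^2 * R^2 * k * k')^q / ((q.factorial : ℝ)^2 * (q+1)) : ℝ) : ℂ) := by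
  rw [integral_div, integral_pow_term R m k k' hR]
  rw [Finset.sum_eq_single q]
  · rw [if_pos (by omega : q = 2*q - q)]
    have hfac0 : (2*q).choose q * q.factorial * q.factorial = (2*q).factorial := by
      have := Nat.choose_mul_factorial_mul_factorial (show q ≤ 2*q by omega)
      rwa [show 2*q - q = q by omega] at this
    have hfac : ((2*q).factorial : ℝ)
        = ((2*q).choose q : ℝ) * (q.factorial : ℝ) * (q.factorial : ℝ) := by
      exact_mod_cast hfac0.symm
    have hchoose_pos : (0:ℝ) < ((2*q).choose q : ℝ) := by
      exact_mod_cast Nat.choose_pos (by omega : q ≤ 2*q)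
    have hqfac_pos : (0:ℝ) < (q.factorial : ℝ) := by
      exact_mod_cast q.factorial_pos
    have hreal : (m^(2*q) * k^q * k'^(2*q-q) * ((2*q).choose q : ℝ))
          * (R^(2*q+2)/(2*q+2) * (2*π)) / ((2*q).factorial : ℝ)
        = π * R^2 * (m^2 * R^2 * k * k')^q / ((q.factorial : ℝ)^2 * (q+1)) := by
      rw [show 2*q - q = q by omega, hfac]
      have h1 : m^(2*q) = (m^2)^q := by rw [← pow_mul]
      have h2 : R^(2*q+2) = (R^2)^q * R^2 := by rw [← pow_mul, ← pow_add]
      rw [h1, h2, mul_pow, mul_pow, mul_pow]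
      field_simp
      try ring
    refine Eq.trans ?_ (congrArg Complex.ofReal hreal)
    push_cast
    ring
  · intro j hj hne
    have hj' : j ≤ 2*q := Nat.lt_succ_iff.mp (Finset.mem_range.mp hj)
    rw [if_neg (by omega : ¬ j = 2*q - j), mul_zero, mul_zero]
  · intro h
    exact absurd (Finset.mem_range.mpr (by omega)) h

lemma summable_rhs (x : ℝ) :
    Summable (fun q : ℕ => x^q / ((q.factorial : ℝ)^2 * (q+1))) := by
  refine Summable.of_norm_bounded (Real.summable_pow_div_factorial |x|) fun q => ?_
  have h1 : (1:ℝ) ≤ (q.factorial : ℝ) := by exact_mod_cast q.factorial_pos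
  have h2 : (q.factorial : ℝ) ≤ (q.factorial : ℝ)^2 * (q+1) := by nlinarith
  rw [norm_div, norm_pow, Real.norm_eq_abs, Real.norm_eq_abs,
    abs_of_pos (by positivity : (0:ℝ) < (q.factorial : ℝ)^2 * (q+1))]
  gcongr

/-- `∫_{B_R(0)} e^{m(zk + z̄k')} dμ(z) = π R² ∑_{q≥0} (m²R²kk')^q / ((q!)²(q+1))`. -/
theorem disk_exponential_integral (R m k k' : ℝ) (hR : 0 < R) (hm : 0 < m) :
    (∫ z in Metric.ball (0:ℂ) R,
        Complex.exp (↑m * (z * ↑k + (starRingEnd ℂ) z * ↑k'))) =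
      ((Real.pi * R^2 *
        ∑' q : ℕ, (m^2 * R^2 * k * k')^q / ((q.factorial : ℝ)^2 * (q+1)) : ℝ) : ℂ) := by
  have hcont : Continuous fun z : ℂ => (m : ℂ) * (z * (k:ℂ) + (starRingEnd ℂ) z * (k':ℂ)) := by
    have : Continuous fun z : ℂ => (starRingEnd ℂ) z := Complex.continuous_conj
    continuity
  set B : ℝ := m * ((|k| + |k'|) * R) with hB
  have hBnn : 0 ≤ B := by positivity
  have hbound : ∀ n : ℕ, ∀ z ∈ Metric.ball (0:ℂ) R,
      ‖((m : ℂ) * (z * (k:ℂ) + (starRingEnd ℂ) z * (k':ℂ))) ^ n / (n ! : ℂ)‖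
        ≤ B ^ n / (n ! : ℝ) := by
    intro n z hz
    have hzR : ‖z‖ ≤ R := le_of_lt (by rwa [Metric.mem_ball, dist_zero_right] at hz)
    have hcz : ‖(m : ℂ) * (z * (k:ℂ) + (starRingEnd ℂ) z * (k':ℂ))‖ ≤ B := by
      rw [norm_mul, Complex.norm_real, Real.norm_eq_abs, abs_of_pos hm]
      have h1 : ‖z * (k:ℂ) + (starRingEnd ℂ) z * (k':ℂ)‖ ≤ (|k| + |k'|) * R := by
        calc ‖z * (k:ℂ) + (starRingEnd ℂ) z * (k':ℂ)‖
            ≤ ‖z * (k:ℂ)‖ + ‖(starRingEnd ℂ) z * (k':ℂ)‖ := norm_add_le _ _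
          _ = ‖z‖ * |k| + ‖z‖ * |k'| := by
              rw [norm_mul, norm_mul, Complex.norm_real, Complex.norm_real,
                RCLike.norm_conj, Real.norm_eq_abs, Real.norm_eq_abs]
          _ ≤ R * |k| + R * |k'| := by
              have := abs_nonneg k; have := abs_nonneg k'
              nlinarith
          _ = (|k| + |k'|) * R := by ring
      rw [hB]
      exact mul_le_mul_of_nonneg_left h1 hm.le
    rw [norm_div, norm_pow, Complex.norm_natCast]
    gcongr
  have hexp_rw : (∫ z in Metric.ball (0:ℂ) R,
        Complex.exp (↑m * (z * ↑k + (starRingEnd ℂ) z * ↑k')))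
      = ∫ z in Metric.ball (0:ℂ) R,
          ∑' n : ℕ, ((m : ℂ) * (z * (k:ℂ) + (starRingEnd ℂ) z * (k':ℂ))) ^ n / (n ! : ℂ) := by
    refine integral_congr_ae (Eventually.of_forall fun z => ?_)
    rw [Complex.exp_eq_exp_ℂ, NormedSpace.exp_eq_tsum_div]
  rw [hexp_rw]
  rw [integral_tsum]
  · have hs_even : ∀ q : ℕ, (∫ z in Metric.ball (0:ℂ) R,
        ((m : ℂ) * (z * (k:ℂ) + (starRingEnd ℂ) z * (k':ℂ))) ^ (2*q) / ((2*q)! : ℂ))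
          = ((π * R^2 * (m^2 * R^2 * k * k')^q / ((q.factorial : ℝ)^2 * (q+1)) : ℝ) : ℂ) :=
      term_even R m k k' hR
    have hs_odd : ∀ q : ℕ, (∫ z in Metric.ball (0:ℂ) R,
        ((m : ℂ) * (z * (k:ℂ) + (starRingEnd ℂ) z * (k':ℂ))) ^ (2*q+1) / ((2*q+1)! : ℂ)) = 0 :=
      term_odd R m k k' hR
    rw [← tsum_even_add_odd]
    · simp only [hs_even, hs_odd, tsum_zero, add_zero]
      rw [← Complex.ofReal_tsum]
      congr 1
      rw [← tsum_mul_left]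
      congr 1
      funext q
      ring
    · simp only [hs_even]
      rw [Complex.summable_ofReal]
      have := (summable_rhs (m^2 * R^2*k*k')).mul_left (π * R^2)
      refine this.congr fun q => ?_
      ring
    · simp only [hs_odd]
      exact summable_zero
  · intro n
    exact (((hcont.pow n).div_const _).aestronglyMeasurable)
  · refine ne_top_of_le_ne_top ?_ (ENNReal.tsum_le_tsum fun n =>
      (setLIntegral_mono' measurableSet_ball (fun z hz => ?_) :
        (∫⁻ z in Metric.ball (0:ℂ) R,
          ‖((m : ℂ) * (z * (k:ℂ) + (starRingEnd ℂ) z * (k':ℂ))) ^ n / (n ! : ℂ)‖₊)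
          ≤ ∫⁻ _ in Metric.ball (0:ℂ) R, ENNReal.ofReal (B ^ n / (n ! : ℝ))).trans
      (le_of_eq (setLIntegral_const _ _)))
    · rw [ENNReal.tsum_mul_right]
      refine ENNReal.mul_ne_top ?_ measure_ball_lt_top.ne
      rw [← ENNReal.ofReal_tsum_of_nonneg (fun n => by positivity)
        (Real.summable_pow_div_factorial B)]
      exact ENNReal.ofReal_ne_top
    · rw [← enorm_eq_nnnorm, ← ofReal_norm]
      exact ENNReal.ofReal_le_ofReal (hbound n z hz)

end
end

section
/- Let R > 0, a ≥ 0 and c ∈ ℝ. Then lim_{m→∞} m^{−1} · #{ q ∈ ℤ_{≥0} : ((q+1)/(eRm)) · ln((q+1)/(eRm)) + c/m < a } = eR κ(a), where κ(a) denotes the Lebesgue measure of the set { t > 0 : t ln t < a }. -/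
open MeasureTheory Filter Set

noncomputable def kappa (s : ℝ) : ℝ :=
  (volume { t : ℝ | 0 < t ∧ t * Real.log t < s }).toReal


private lemma g_mono : StrictMonoOn (fun t : ℝ => t * Real.log t) (Set.Ici 1) := by
  intro x hx y hy hxy
  simp only [Set.mem_Ici] at hx hy
  have h0x : (0:ℝ) < x := lt_of_lt_of_le one_pos hx
  have hlx : 0 ≤ Real.log x := Real.log_nonneg hx
  have hlog : Real.log x < Real.log y := Real.log_lt_log h0x hxy
  have h1 : x * Real.log x ≤ y * Real.log x := mul_le_mul_of_nonneg_right hxy.le hlx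
  have h2 : y * Real.log x < y * Real.log y :=
    mul_lt_mul_of_pos_left hlog (lt_of_lt_of_le one_pos hy)
  exact h1.trans_lt h2

private lemma exists_tau (a : ℝ) (ha : 0 ≤ a) :
    ∃ τ : ℝ, 1 ≤ τ ∧ τ * Real.log τ = a := by
  set M := Real.exp (a + 1) with hM
  have hM1 : 1 ≤ M := Real.one_le_exp (by linarith)
  have hcont : ContinuousOn (fun t : ℝ => t * Real.log t) (Set.Icc 1 M) := by
    refine ContinuousOn.mul continuousOn_id (Real.continuousOn_log.mono ?_)
    intro x hx
    simp only [Set.mem_compl_iff, Set.mem_singleton_iff]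
    have := hx.1
    intro h; rw [h] at this; linarith
  have key := intermediate_value_Icc hM1 hcont
  have hfM : M * Real.log M = M * (a + 1) := by rw [hM, Real.log_exp]
  have hmem : a ∈ Set.Icc ((1:ℝ) * Real.log 1) (M * Real.log M) := by
    constructor
    · simpa using ha
    · rw [hfM]; nlinarith
  obtain ⟨τ, hτmem, hτeq⟩ := key hmem
  exact ⟨τ, hτmem.1, hτeq⟩

private lemma kappa_eq (a τ : ℝ) (ha : 0 ≤ a) (hτ1 : 1 ≤ τ) (hτa : τ * Real.log τ = a) :
    kappa a = τ := by
  have hset : { t : ℝ | 0 < t ∧ t * Real.log t < a } = Set.Ioo 0 τ := by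
    ext t
    simp only [Set.mem_setOf_eq, Set.mem_Ioo]
    constructor
    · rintro ⟨ht, hlt⟩
      refine ⟨ht, ?_⟩
      by_contra h
      push_neg at h
      have := g_mono.monotoneOn (Set.mem_Ici.mpr hτ1)
        (Set.mem_Ici.mpr (hτ1.trans h)) h
      rw [hτa] at this
      linarith
    · rintro ⟨ht, hlt⟩
      refine ⟨ht, ?_⟩
      rcases lt_or_ge t 1 with h1 | h1
      · have : Real.log t < 0 := Real.log_neg ht h1
        nlinarith
      · have := g_mono (Set.mem_Ici.mpr h1) (Set.mem_Ici.mpr hτ1) hlt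
        simp only at this
        rwa [hτa] at this
  rw [kappa, hset, Real.volume_Ioo, sub_zero, ENNReal.toReal_ofReal (by linarith)]

/-- `lim_{m→∞} m⁻¹ #{q ≥ 0 : ((q+1)/(eRm)) ln((q+1)/(eRm)) + c/m < a} = eR κ(a)`. -/
theorem counting_limit_kappa (R a c : ℝ) (hR : 0 < R) (ha : 0 ≤ a) :
    Tendsto (fun m : ℝ =>
        (Nat.card { q : ℕ |
          ((q + 1 : ℝ) / (Real.exp 1 * R * m)) *
              Real.log ((q + 1 : ℝ) / (Real.exp 1 * R * m)) + c / m < a } : ℝ) / m)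
      atTop (nhds (Real.exp 1 * R * kappa a)) := by
  obtain ⟨τ, hτ1, hτa⟩ := exists_tau a ha
  rw [kappa_eq a τ ha hτ1 hτa]
  set E := Real.exp 1 * R with hE
  clear_value E
  have hE0 : 0 < E := by rw [hE]; exact mul_pos (Real.exp_pos 1) hR
  rw [Metric.tendsto_nhds]
  intro ε hε
  obtain ⟨η, hη0, hη4, hηε⟩ :
      ∃ η : ℝ, 0 < η ∧ η ≤ 1/4 ∧ E * η ≤ ε / 4 := by
    refine ⟨min (ε / (4 * E)) (1/4), lt_min (div_pos hε (by positivity)) (by norm_num),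
      min_le_right _ _, ?_⟩
    have h1 : min (ε / (4 * E)) (1/4) ≤ ε / (4 * E) := min_le_left _ _
    have h2 : E * min (ε / (4 * E)) (1/4) ≤ E * (ε / (4 * E)) :=
      mul_le_mul_of_nonneg_left h1 hE0.le
    have h3 : E * (ε / (4 * E)) = ε / 4 := by field_simp
    linarith
  -- compact maximum of g on [η, τ - η]
  have hicc : η ≤ τ - η := by linarith
  have hcont : ContinuousOn (fun t : ℝ => t * Real.log t) (Set.Icc η (τ - η)) := by
    refine ContinuousOn.mul continuousOn_id (Real.continuousOn_log.mono ?_)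
    intro x hx
    simp only [Set.mem_compl_iff, Set.mem_singleton_iff]
    have := hx.1
    intro h; rw [h] at this; linarith
  obtain ⟨x₀, hx₀mem, hx₀max⟩ := isCompact_Icc.exists_isMaxOn
    (Set.nonempty_Icc.mpr hicc) hcont
  rw [isMaxOn_iff] at hx₀max
  have hMa : x₀ * Real.log x₀ < a := by
    rcases lt_or_ge x₀ 1 with h1 | h1
    · have hx0pos : 0 < x₀ := lt_of_lt_of_le hη0 hx₀mem.1
      have : Real.log x₀ < 0 := Real.log_neg hx0pos h1
      nlinarith
    · have hlt : x₀ < τ := lt_of_le_of_lt hx₀mem.2 (by linarith)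
      have := g_mono (Set.mem_Ici.mpr h1) (Set.mem_Ici.mpr hτ1) hlt
      simp only at this
      rwa [hτa] at this
  have hτ'a : a < (τ + η) * Real.log (τ + η) := by
    have := g_mono (Set.mem_Ici.mpr hτ1) (Set.mem_Ici.mpr (by linarith : (1:ℝ) ≤ τ + η))
      (by linarith : τ < τ + η)
    simp only at this
    rwa [hτa] at this
  -- eventual facts
  have hc0 : Tendsto (fun m : ℝ => c / m) atTop (nhds 0) :=
    tendsto_const_nhds.div_atTop tendsto_id
  have ev2 : ∀ᶠ m in atTop, a - c / m < (τ + η) * Real.log (τ + η) := by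
    have ht : Tendsto (fun m : ℝ => a - c / m) atTop (nhds a) := by
      simpa using tendsto_const_nhds.sub hc0
    exact ht.eventually_lt_const hτ'a
  have ev3 : ∀ᶠ m in atTop, c / m < a - x₀ * Real.log x₀ :=
    hc0.eventually_lt_const (by linarith)
  have ev1 : ∀ᶠ m in atTop, max 1 (max (2 / ε + 1) (2 / (E * (τ - 2 * η)))) ≤ m :=
    eventually_ge_atTop _
  filter_upwards [ev1, ev2, ev3] with m hm h2 h3
  have hm1 : (1:ℝ) ≤ m := le_trans (le_max_left _ _) hm
  have hm2 : 2 / ε + 1 ≤ m := le_trans (le_trans (le_max_left _ _) (le_max_right _ _)) hm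
  have hm3 : 2 / (E * (τ - 2 * η)) ≤ m :=
    le_trans (le_trans (le_max_right _ _) (le_max_right _ _)) hm
  have hm0 : 0 < m := lt_of_lt_of_le one_pos hm1
  have hEm : 0 < E * m := mul_pos hE0 hm0
  set S := { q : ℕ |
      ((q + 1 : ℝ) / (E * m)) * Real.log ((q + 1 : ℝ) / (E * m)) + c / m < a } with hS
  clear_value S
  -- upper bound
  obtain ⟨n, hnl, hnu⟩ : ∃ n : ℕ, E * m * (τ + η) ≤ (n : ℝ) ∧
      (n : ℝ) < E * m * (τ + η) + 1 :=
    ⟨⌈E * m * (τ + η)⌉₊, Nat.le_ceil _, Nat.ceil_lt_add_one (by positivity)⟩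
  have hsub : S ⊆ Set.Iio n := by
    intro q hq
    rw [hS, Set.mem_setOf_eq] at hq
    have ht0 : (0:ℝ) < (q + 1 : ℝ) / (E * m) := div_pos (by positivity) hEm
    have hgt : ((q + 1 : ℝ) / (E * m)) * Real.log ((q + 1 : ℝ) / (E * m))
        < (τ + η) * Real.log (τ + η) := by linarith
    have htlt : (q + 1 : ℝ) / (E * m) < τ + η := by
      by_contra hcon
      push_neg at hcon
      have := g_mono.monotoneOn (Set.mem_Ici.mpr (by linarith : (1:ℝ) ≤ τ + η))
        (Set.mem_Ici.mpr (le_trans (by linarith) hcon)) hcon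
      linarith
    have hq1 : (q + 1 : ℝ) < E * m * (τ + η) := by
      have h := (div_lt_iff₀ hEm).mp htlt
      rw [mul_comm] at h
      exact h
    have : (q : ℝ) < (n : ℝ) := by linarith
    exact_mod_cast this
  have hfin : S.Finite := (Set.finite_Iio n).subset hsub
  have hub : (Nat.card S : ℝ) ≤ E * m * (τ + η) + 1 := by
    have h1 : Nat.card S ≤ Nat.card (Set.Iio n) :=
      Nat.card_mono (Set.finite_Iio n) hsub
    have hIio : Nat.card (Set.Iio n) = n := by
      rw [Nat.card_coe_set_eq, ← Finset.coe_Iio, Set.ncard_coe_finset, Nat.card_Iio]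
    rw [hIio] at h1
    have := (Nat.cast_le (α := ℝ)).mpr h1
    linarith
  -- lower bound
  obtain ⟨n₁, hn₁1, hn₁l, hn₁u⟩ : ∃ n₁ : ℕ, 1 ≤ n₁ ∧ E * m * η ≤ (n₁ : ℝ) ∧
      (n₁ : ℝ) < E * m * η + 1 :=
    ⟨⌈E * m * η⌉₊, Nat.one_le_ceil_iff.mpr (mul_pos hEm hη0), Nat.le_ceil _,
      Nat.ceil_lt_add_one (mul_pos hEm hη0).le⟩
  obtain ⟨n₂, hn₂l, hn₂u⟩ : ∃ n₂ : ℕ, E * m * (τ - η) - 1 < (n₂ : ℝ) ∧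
      (n₂ : ℝ) ≤ E * m * (τ - η) := by
    refine ⟨⌊E * m * (τ - η)⌋₊, ?_, Nat.floor_le (mul_pos hEm (by linarith)).le⟩
    have := Nat.lt_floor_add_one (E * m * (τ - η))
    linarith
  have hgap : (2:ℝ) ≤ E * m * (τ - 2 * η) := by
    rw [div_le_iff₀ (mul_pos hE0 (by linarith) : (0:ℝ) < E * (τ - 2 * η))] at hm3
    nlinarith
  have hexp : E * m * (τ - 2 * η) = E * m * (τ - η) - E * m * η := by ring
  have hn₁₂ : n₁ ≤ n₂ := by
    have : (n₁ : ℝ) < (n₂ : ℝ) := by linarith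
    exact_mod_cast this.le
  have hsub2 : Set.Icc (n₁ - 1) (n₂ - 1) ⊆ S := by
    intro q hq
    simp only [Set.mem_Icc] at hq
    have hq1 : n₁ ≤ q + 1 := by omega
    have hq2 : q + 1 ≤ n₂ := by omega
    rw [hS, Set.mem_setOf_eq]
    have h1 : (n₁ : ℝ) ≤ (q : ℝ) + 1 := by exact_mod_cast hq1
    have h2 : (q : ℝ) + 1 ≤ (n₂ : ℝ) := by exact_mod_cast hq2
    have e1 : η * (E * m) = E * m * η := by ring
    have e2 : (τ - η) * (E * m) = E * m * (τ - η) := by ring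
    have htlb : η ≤ (q + 1 : ℝ) / (E * m) := by
      rw [le_div_iff₀ hEm, e1]; linarith
    have htub : (q + 1 : ℝ) / (E * m) ≤ τ - η := by
      rw [div_le_iff₀ hEm, e2]; linarith
    have := hx₀max ((q + 1 : ℝ) / (E * m)) ⟨htlb, htub⟩
    linarith
  have hlb : E * m * (τ - 2 * η) - 1 ≤ (Nat.card S : ℝ) := by
    have h1 : Nat.card (Set.Icc (n₁ - 1) (n₂ - 1)) ≤ Nat.card S :=
      Nat.card_mono hfin hsub2
    have hIcc : Nat.card (Set.Icc (n₁ - 1) (n₂ - 1)) = n₂ - 1 + 1 - (n₁ - 1) := by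
      rw [Nat.card_coe_set_eq, ← Finset.coe_Icc, Set.ncard_coe_finset, Nat.card_Icc]
    rw [hIcc] at h1
    have hcard : ((n₂ - 1 + 1 - (n₁ - 1) : ℕ) : ℝ) = (n₂ : ℝ) - n₁ + 1 := by
      have h : n₂ - 1 + 1 - (n₁ - 1) = n₂ - n₁ + 1 := by omega
      rw [h]
      push_cast [Nat.cast_sub hn₁₂]
      ring
    have h2 := (Nat.cast_le (α := ℝ)).mpr h1
    rw [hcard] at h2
    linarith
  -- conclude
  have hinv : 1 / m < ε / 2 := by
    have h2e : (0:ℝ) < 2 / ε := by positivity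
    have hm2' : 2 / ε < m := by linarith
    rw [div_lt_iff₀ hε] at hm2'
    rw [div_lt_div_iff₀ hm0 (by norm_num : (0:ℝ) < 2)]
    linarith
  rw [Real.dist_eq, abs_lt]
  have hNu : (Nat.card S : ℝ) / m ≤ E * (τ + η) + 1 / m := by
    rw [div_le_iff₀ hm0]
    have h : (E * (τ + η) + 1 / m) * m = E * m * (τ + η) + 1 := by
      field_simp
    rw [h]; exact hub
  have hNl : E * (τ - 2 * η) - 1 / m ≤ (Nat.card S : ℝ) / m := by
    rw [le_div_iff₀ hm0]
    have h : (E * (τ - 2 * η) - 1 / m) * m = E * m * (τ - 2 * η) - 1 := by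
      field_simp
    rw [h]; exact hlb
  have r1 : E * (τ + η) = E * τ + E * η := by ring
  have r2 : E * (τ - 2 * η) = E * τ - 2 * (E * η) := by ring
  constructor
  · linarith
  · linarith
end

section
/- Let R > 0, α ≥ 0 and s > 0. Then limsup_{m→∞} m^{−1} · #{ q ∈ ℤ_{≥0} : e^{mα} (mR)^{q+1} / (q! √(q+1)) > √s } ≤ eR κ(α/(eR)), where κ(u) denotes the Lebesgue measure of the set { t > 0 : t ln t < u }. -/
open MeasureTheory Filter Set

lemma kappa_subset (u : ℝ) (hu : 0 ≤ u) :
    { t : ℝ | 0 < t ∧ t * Real.log t < u } ⊆ Set.Ioo 0 (Real.exp u + 1) := by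
  rintro t ⟨ht, htu⟩
  refine ⟨ht, ?_⟩
  rcases le_or_gt t 1 with h | h
  · have h1 : (1:ℝ) ≤ Real.exp u := Real.one_le_exp hu
    linarith
  · have hlt : Real.log t < u := by nlinarith [Real.log_pos h]
    have : t < Real.exp u := by
      calc t = Real.exp (Real.log t) := (Real.exp_log ht).symm
      _ < Real.exp u := Real.exp_lt_exp.mpr hlt
    linarith

lemma kappa_vol_lt_top (u : ℝ) (hu : 0 ≤ u) :
    volume { t : ℝ | 0 < t ∧ t * Real.log t < u } < ⊤ :=
  lt_of_le_of_lt (measure_mono (kappa_subset u hu))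
    (by rw [Real.volume_Ioo]; exact ENNReal.ofReal_lt_top)

lemma one_le_kappa (u : ℝ) (hu : 0 ≤ u) : 1 ≤ kappa u := by
  have hsub : Set.Ioo (0:ℝ) 1 ⊆ { t : ℝ | 0 < t ∧ t * Real.log t < u } := by
    rintro t ⟨ht0, ht1⟩
    have : Real.log t < 0 := Real.log_neg ht0 ht1
    exact ⟨ht0, by nlinarith⟩
  have h : volume (Set.Ioo (0:ℝ) 1) ≤ volume { t : ℝ | 0 < t ∧ t * Real.log t < u } :=
    measure_mono hsub
  have h2 := ENNReal.toReal_mono (kappa_vol_lt_top u hu).ne h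
  rw [Real.volume_Ioo, ENNReal.toReal_ofReal (by norm_num)] at h2
  simpa [kappa] using h2

lemma lt_mul_log_of_kappa_lt (u x : ℝ) (hu : 0 ≤ u) (hx : kappa u < x) :
    u < x * Real.log x := by
  by_contra hcon
  push_neg at hcon
  have hx1 : 1 < x := lt_of_le_of_lt (one_le_kappa u hu) hx
  have hsub : Set.Ioo (0:ℝ) x ⊆ { t : ℝ | 0 < t ∧ t * Real.log t < u } ∪ {1} := by
    rintro t ⟨ht0, htx⟩
    rcases lt_trichotomy t 1 with h | h | h
    · exact Or.inl ⟨ht0, by nlinarith [Real.log_neg ht0 h]⟩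
    · exact Or.inr (by simp [h])
    · refine Or.inl ⟨ht0, ?_⟩
      have hlogx : 0 < Real.log x := Real.log_pos hx1
      have hlt : Real.log t ≤ Real.log x := Real.log_le_log (by linarith) htx.le
      have h0 : 0 < Real.log t := Real.log_pos h
      nlinarith
  have hvol : volume (Set.Ioo (0:ℝ) x) ≤ volume { t : ℝ | 0 < t ∧ t * Real.log t < u } := by
    calc volume (Set.Ioo (0:ℝ) x)
        ≤ volume ({ t : ℝ | 0 < t ∧ t * Real.log t < u } ∪ {1}) := measure_mono hsub
      _ ≤ volume { t : ℝ | 0 < t ∧ t * Real.log t < u } + volume ({1} : Set ℝ) :=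
          measure_union_le _ _
      _ = volume { t : ℝ | 0 < t ∧ t * Real.log t < u } := by simp
  have h2 := ENNReal.toReal_mono (kappa_vol_lt_top u hu).ne hvol
  rw [Real.volume_Ioo, ENNReal.toReal_ofReal (by linarith : (0:ℝ) ≤ x - 0)] at h2
  have : x ≤ kappa u := by rw [kappa]; linarith
  linarith

lemma pow_le_exp_mul_factorial (q : ℕ) : (q:ℝ)^q ≤ Real.exp q * q.factorial := by
  have h := Real.sum_le_exp_of_nonneg (x := (q:ℝ)) (Nat.cast_nonneg q) (q+1)
  have hterm : (q:ℝ)^q / q.factorial ≤ ∑ i ∈ Finset.range (q+1), (q:ℝ)^i / i.factorial := by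
    refine Finset.single_le_sum (f := fun i => (q:ℝ)^i / i.factorial) ?_ (Finset.self_mem_range_succ q)
    intro i _
    positivity
  have hfac : (0:ℝ) < q.factorial := by exact_mod_cast q.factorial_pos
  have := hterm.trans h
  rw [div_le_iff₀ hfac] at this
  linarith

/-- monotonicity of `y ↦ y log (y/c)` past `c`. -/
lemma mul_log_div_mono {a y c : ℝ} (hc : 0 < c) (hca : c ≤ a) (hay : a ≤ y) :
    a * Real.log (a / c) ≤ y * Real.log (y / c) := by
  have ha : 0 < a := lt_of_lt_of_le hc hca
  have hy : 0 < y := lt_of_lt_of_le ha hay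
  have h1 : (0:ℝ) ≤ Real.log (a / c) := Real.log_nonneg ((one_le_div hc).mpr hca)
  have h2 : Real.log (a / c) ≤ Real.log (y / c) :=
    Real.log_le_log (by positivity) (by gcongr)
  nlinarith

set_option maxHeartbeats 1000000 in
/-- `limsup_{m→∞} m⁻¹ #{q ≥ 0 : e^{mα}(mR)^{q+1}/(q!√(q+1)) > √s} ≤ eR κ(α/(eR))`. -/
theorem counting_limsup_kappa (R α s : ℝ) (hR : 0 < R) (hα : 0 ≤ α) (hs : 0 < s) :
    limsup (fun m : ℝ =>
        (Nat.card { q : ℕ |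
          Real.sqrt s <
            Real.exp (m * α) * (m * R)^(q + 1) /
              ((q.factorial : ℝ) * Real.sqrt (q + 1)) } : ℝ) / m)
      atTop ≤ Real.exp 1 * R * kappa (α / (Real.exp 1 * R)) := by
  set f : ℝ → ℝ := fun m =>
    (Nat.card { q : ℕ |
      Real.sqrt s <
        Real.exp (m * α) * (m * R)^(q + 1) /
          ((q.factorial : ℝ) * Real.sqrt (q + 1)) } : ℝ) / m with hf
  have he1 : (0:ℝ) < Real.exp 1 := Real.exp_pos 1
  set u : ℝ := α / (Real.exp 1 * R) with hu_def
  have hu : 0 ≤ u := div_nonneg hα (by positivity)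
  set T : ℝ := Real.exp 1 * R * kappa u with hT_def
  have hk1 : 1 ≤ kappa u := one_le_kappa u hu
  have heRT : Real.exp 1 * R ≤ T := by
    have h := mul_le_mul_of_nonneg_left hk1 (by positivity : (0:ℝ) ≤ Real.exp 1 * R)
    rw [mul_one] at h
    exact h
  have hT0 : 0 < T := lt_of_lt_of_le (by positivity) heRT
  -- the key eventual bound
  have key : ∀ ε : ℝ, 0 < ε → ∀ᶠ m : ℝ in atTop, f m ≤ T + ε := by
    intro ε hε
    obtain ⟨ε', hε'_def⟩ : ∃ x : ℝ, x = ε / 2 := ⟨_, rfl⟩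
    have hε' : 0 < ε' := by rw [hε'_def]; positivity
    obtain ⟨x₀, hx₀_def⟩ : ∃ x : ℝ, x = (T + ε') / (Real.exp 1 * R) := ⟨_, rfl⟩
    have hx₀k : kappa u < x₀ := by
      rw [hx₀_def, hT_def, lt_div_iff₀ (by positivity)]
      nlinarith
    have hx₀1 : 1 < x₀ := lt_of_le_of_lt hk1 hx₀k
    have hux₀ : u < x₀ * Real.log x₀ := lt_mul_log_of_kappa_lt u x₀ hu hx₀k
    obtain ⟨δ, hδ_def⟩ : ∃ x : ℝ, x = Real.exp 1 * R * (x₀ * Real.log x₀) - α := ⟨_, rfl⟩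
    have hδ : 0 < δ := by
      have : α = u * (Real.exp 1 * R) := by rw [hu_def, div_mul_cancel₀ _ (by positivity)]
      rw [hδ_def, this]
      nlinarith
    have hB : Tendsto (fun m : ℝ => m * (δ / 2)) atTop atTop :=
      Tendsto.atTop_mul_const (by positivity) tendsto_id
    obtain ⟨η, hη_def⟩ : ∃ x : ℝ, x = δ / (2 * R) := ⟨_, rfl⟩
    have hη : 0 < η := by rw [hη_def]; positivity
    obtain ⟨B, hB_def⟩ : ∃ x : ℝ, x = -(1 + Real.log η + Real.log (Real.sqrt s)) := ⟨_, rfl⟩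
    filter_upwards [eventually_ge_atTop (1:ℝ), eventually_ge_atTop (2/ε),
      hB.eventually_ge_atTop B] with m hm1 hm2 hmB
    have hm0 : 0 < m := lt_of_lt_of_le one_pos hm1
    -- the log bound (E2)
    have hE2 : Real.log (m * R) ≤ m * δ + Real.log (Real.sqrt s) := by
      have h1 : Real.log (m * R * η) ≤ m * R * η - 1 :=
        Real.log_le_sub_one_of_pos (by positivity)
      have h2 : Real.log (m * R * η) = Real.log (m * R) + Real.log η :=
        Real.log_mul (by positivity) (ne_of_gt hη)
      have h3 : m * R * η = m * (δ / 2) := by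
        rw [hη_def]; field_simp
      rw [h2, h3] at h1
      have hthis : B ≤ m * (δ / 2) := hmB
      rw [hB_def] at hthis
      have hmd : m * δ = 2 * (m * (δ / 2)) := by ring
      linarith
    obtain ⟨N, hN_def⟩ : ∃ n : ℕ, n = ⌈m * (T + ε')⌉₊ := ⟨_, rfl⟩
    -- subset bound
    have hsub : { q : ℕ |
        Real.sqrt s <
          Real.exp (m * α) * (m * R)^(q + 1) /
            ((q.factorial : ℝ) * Real.sqrt (q + 1)) } ⊆ Set.Iio N := by
      intro q hq
      simp only [Set.mem_setOf_eq] at hq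
      by_contra hqN
      simp only [Set.mem_Iio, not_lt] at hqN
      have hqm : m * (T + ε') ≤ (q:ℝ) := by
        calc m * (T + ε') ≤ (N:ℝ) := by rw [hN_def]; exact Nat.le_ceil _
        _ ≤ (q:ℝ) := by exact_mod_cast hqN
      have hq0 : (0:ℝ) < q := lt_of_lt_of_le (by positivity) hqm
      -- key monotone bound: q log(q/(e m R)) ≥ m (α + δ)
      have hmono := mul_log_div_mono (a := m * (T + ε')) (y := (q:ℝ))
        (c := Real.exp 1 * m * R)
        (by positivity) (by nlinarith) hqm
      have hx₀eq : m * (T + ε') / (Real.exp 1 * m * R) = x₀ := by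
        rw [hx₀_def]; field_simp
      rw [hx₀eq] at hmono
      have hkey : m * (α + δ) ≤ (q:ℝ) * Real.log ((q:ℝ) / (Real.exp 1 * m * R)) := by
        calc m * (α + δ) = m * (T + ε') * Real.log x₀ := by
              have hTε : T + ε' = Real.exp 1 * R * x₀ := by
                rw [hx₀_def]; field_simp
              rw [hδ_def, hTε]; ring
        _ ≤ (q:ℝ) * Real.log ((q:ℝ) / (Real.exp 1 * m * R)) := hmono
      have hlogexp : Real.log ((q:ℝ) / (Real.exp 1 * m * R)) =
          Real.log q - 1 - Real.log (m * R) := by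
        rw [Real.log_div (ne_of_gt hq0) (by positivity),
          show Real.exp 1 * m * R = Real.exp 1 * (m * R) by ring,
          Real.log_mul (by positivity) (by positivity), Real.log_exp]
        ring
      rw [hlogexp] at hkey
      have hkey' : m * α + m * δ ≤
          (q:ℝ) * Real.log q - (q:ℝ) - (q:ℝ) * Real.log (m * R) := by
        calc m * α + m * δ = m * (α + δ) := by ring
        _ ≤ (q:ℝ) * (Real.log q - 1 - Real.log (m * R)) := hkey
        _ = (q:ℝ) * Real.log q - (q:ℝ) - (q:ℝ) * Real.log (m * R) := by ring
      -- now the contradiction: the quantity is ≤ √s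
      have hfq : (q:ℝ)^q / Real.exp q ≤ (q.factorial : ℝ) * Real.sqrt (q + 1) := by
        have h1 : (q:ℝ)^q / Real.exp q ≤ (q.factorial : ℝ) := by
          rw [div_le_iff₀ (Real.exp_pos _)]
          have := pow_le_exp_mul_factorial q
          linarith
        have h2 : (1:ℝ) ≤ Real.sqrt (q + 1) := by
          rw [Real.one_le_sqrt]
          linarith [Nat.cast_nonneg (α := ℝ) q]
        have h3 : (0:ℝ) ≤ (q.factorial : ℝ) := by positivity
        nlinarith
      have hnum : (0:ℝ) ≤ Real.exp (m * α) * (m * R)^(q + 1) := by positivity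
      have hden : (0:ℝ) < (q:ℝ)^q / Real.exp q := by positivity
      have hle1 : Real.exp (m * α) * (m * R)^(q + 1) /
          ((q.factorial : ℝ) * Real.sqrt (q + 1)) ≤
          Real.exp (m * α) * (m * R)^(q + 1) / ((q:ℝ)^q / Real.exp q) :=
        div_le_div_of_nonneg_left hnum hden hfq
      have hle2 : Real.exp (m * α) * (m * R)^(q + 1) / ((q:ℝ)^q / Real.exp q) ≤
          Real.sqrt s := by
        rw [div_le_iff₀ hden]
        have hlhs : (0:ℝ) < Real.exp (m * α) * (m * R)^(q + 1) := by positivity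
        have hrhs : (0:ℝ) < Real.sqrt s * ((q:ℝ)^q / Real.exp q) := by positivity
        rw [← Real.exp_log hlhs, ← Real.exp_log hrhs]
        apply Real.exp_le_exp.mpr
        rw [Real.log_mul (ne_of_gt (Real.exp_pos _)) (by positivity),
          Real.log_mul (ne_of_gt (Real.sqrt_pos.mpr hs)) (ne_of_gt hden),
          Real.log_exp, Real.log_pow, Real.log_div (by positivity) (ne_of_gt (Real.exp_pos _)),
          Real.log_pow, Real.log_exp]
        push_cast
        nlinarith [hkey', hE2]
      linarith [hle1.trans hle2]
    -- count bound
    have hcard : (Nat.card { q : ℕ |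
        Real.sqrt s <
          Real.exp (m * α) * (m * R)^(q + 1) /
            ((q.factorial : ℝ) * Real.sqrt (q + 1)) } : ℝ) ≤ N := by
      have h1 : Nat.card { q : ℕ |
          Real.sqrt s <
            Real.exp (m * α) * (m * R)^(q + 1) /
              ((q.factorial : ℝ) * Real.sqrt (q + 1)) } ≤ Nat.card (Set.Iio N) :=
        Nat.card_mono (Set.finite_Iio N) hsub
      have h2 : Nat.card (Set.Iio N) = N := by
        have he : (Set.Iio N) = ↑(Finset.range N) := by
          ext x; simp [Finset.coe_range]
        rw [he, Nat.card_coe_set_eq, Set.ncard_coe_finset, Finset.card_range]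
      rw [h2] at h1
      exact_mod_cast h1
    have hNle : (N:ℝ) ≤ m * (T + ε') + 1 := by
      rw [hN_def]
      exact (Nat.ceil_lt_add_one (by positivity)).le
    rw [hf]
    have h1m : 1 / m ≤ ε / 2 := by
      rw [div_le_iff₀ hm0]
      rw [div_le_iff₀ hε] at hm2
      nlinarith
    calc (Nat.card { q : ℕ |
        Real.sqrt s <
          Real.exp (m * α) * (m * R)^(q + 1) /
            ((q.factorial : ℝ) * Real.sqrt (q + 1)) } : ℝ) / m
        ≤ (m * (T + ε') + 1) / m := by
          exact (div_le_div_iff_of_pos_right hm0).mpr (hcard.trans hNle)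
      _ = T + ε' + 1 / m := by field_simp
      _ ≤ T + ε := by rw [hε'_def]; linarith
  -- conclude
  refine le_of_forall_gt_imp_ge_of_dense fun c hc => ?_
  have hcob : IsCoboundedUnder (· ≤ ·) atTop f := by
    apply Filter.isCoboundedUnder_le_of_eventually_le atTop (x := 0)
    filter_upwards [eventually_gt_atTop (0:ℝ)] with m hm
    exact div_nonneg (Nat.cast_nonneg _) hm.le
  exact limsup_le_of_le hcob (by simpa using key (c - T) (by linarith))
end
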